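/- arXiv:1812.10644 — 2 statements merged into one kernel-verified Lean document; each statement's English description precedes it below -/
import Mathlib

section
/- Let $(X_i)_{i=1}^n$ be i.i.d. random variables with values in a (separable) Banach space, and let $S_k = X_1 + \cdots + X_k$. Then for every $\varepsilon > 0$, $\mathbb{P}(\max_{1 \le k \le n} \|S_k\| \ge \varepsilon) \le 3 \max_{1 \le k \le n} \mathbb{P}(\|S_k\| \ge \varepsilon/3)$. -/
open MeasureTheory ProbabilityTheory

/-- Sum of two independent pairs with identically distributed components
are identically distributed. -/
lemma aux_identDistrib_add {Ω : Type*} [MeasurableSpace Ω] {μ : Measure Ω}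
    [IsProbabilityMeasure μ]
    {E : Type*} [NormedAddCommGroup E] [MeasurableSpace E] [BorelSpace E]
    [TopologicalSpace.SeparableSpace E]
    {U V U' V' : Ω → E} (hU : Measurable U) (hV : Measurable V)
    (hU' : Measurable U') (hV' : Measurable V')
    (hUV : IndepFun U V μ) (hUV' : IndepFun U' V' μ)
    (h1 : IdentDistrib U U' μ μ) (h2 : IdentDistrib V V' μ μ) :
    IdentDistrib (fun ω => U ω + V ω) (fun ω => U' ω + V' ω) μ μ := by
  haveI : SecondCountableTopology E := UniformSpace.secondCountable_of_separable E
  have hp : IdentDistrib (fun ω => (U ω, V ω)) (fun ω => (U' ω, V' ω)) μ μ := by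
    refine ⟨(hU.prodMk hV).aemeasurable, (hU'.prodMk hV').aemeasurable, ?_⟩
    rw [(indepFun_iff_map_prod_eq_prod_map_map hU.aemeasurable hV.aemeasurable).1 hUV,
      (indepFun_iff_map_prod_eq_prod_map_map hU'.aemeasurable hV'.aemeasurable).1 hUV',
      h1.map_eq, h2.map_eq]
  exact hp.comp measurable_add

/-- For i.i.d. random variables, the sum over `Ico k (k+m)` is distributed as the
sum over `range m`. -/
lemma aux_identDistrib_sum_Ico {Ω : Type*} [MeasurableSpace Ω] {μ : Measure Ω}
    [IsProbabilityMeasure μ]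
    {E : Type*} [NormedAddCommGroup E] [MeasurableSpace E] [BorelSpace E]
    [TopologicalSpace.SeparableSpace E]
    (X : ℕ → Ω → E) (hmeas : ∀ i, Measurable (X i))
    (hindep : iIndepFun X μ)
    (hident : ∀ i j, IdentDistrib (X i) (X j) μ μ) :
    ∀ m k, IdentDistrib (fun ω => ∑ i ∈ Finset.Ico k (k+m), X i ω)
      (fun ω => ∑ i ∈ Finset.range m, X i ω) μ μ := by
  haveI : SecondCountableTopology E := UniformSpace.secondCountable_of_separable E
  intro m
  induction m with
  | zero =>
    intro k
    simp only [Nat.add_zero, Finset.Ico_self, Finset.sum_empty, Finset.range_zero]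
    exact IdentDistrib.refl aemeasurable_const
  | succ m ih =>
    intro k
    have hmsum : ∀ (s : Finset ℕ), Measurable (fun ω => ∑ i ∈ s, X i ω) :=
      fun s => Finset.measurable_sum _ fun i _ => hmeas i
    have e1 : (fun ω => ∑ i ∈ Finset.Ico k (k+(m+1)), X i ω)
        = fun ω => (∑ i ∈ Finset.Ico k (k+m), X i ω) + X (k+m) ω := by
      funext ω
      rw [← Nat.add_assoc, Finset.sum_Ico_succ_top (Nat.le_add_right k m)]
    have e2 : (fun ω => ∑ i ∈ Finset.range (m+1), X i ω)
        = fun ω => (∑ i ∈ Finset.range m, X i ω) + X m ω := by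
      funext ω
      rw [Finset.sum_range_succ]
    rw [e1, e2]
    have hi1 : IndepFun (fun ω => ∑ i ∈ Finset.Ico k (k+m), X i ω) (X (k+m)) μ := by
      have := hindep.indepFun_finsetSum_of_notMem hmeas
        (s := Finset.Ico k (k+m)) (i := k+m) (by simp)
      simpa [Finset.sum_fn] using this
    have hi2 : IndepFun (fun ω => ∑ i ∈ Finset.range m, X i ω) (X m) μ := by
      have := hindep.indepFun_finsetSum_of_notMem hmeas
        (s := Finset.range m) (i := m) (by simp)
      simpa [Finset.sum_fn] using this
    exact aux_identDistrib_add (hmsum _) (hmeas _) (hmsum _) (hmeas _)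
      hi1 hi2 (ih k) (hident (k+m) m)

/-- Lévy–Ottaviani type maximal inequality for i.i.d. Banach-space-valued random
variables: `P(max_{1 ≤ k ≤ n} ‖S_k‖ ≥ ε) ≤ 3 max_{1 ≤ k ≤ n} P(‖S_k‖ ≥ ε/3)`. -/
theorem stmt0 {Ω : Type*} [MeasurableSpace Ω] (μ : Measure Ω) [IsProbabilityMeasure μ]
    {E : Type*} [NormedAddCommGroup E] [NormedSpace ℝ E] [CompleteSpace E]
    [MeasurableSpace E] [BorelSpace E] [TopologicalSpace.SeparableSpace E]
    (n : ℕ) (X : ℕ → Ω → E)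
    (hmeas : ∀ i, Measurable (X i))
    (hindep : iIndepFun X μ)
    (hident : ∀ i j, IdentDistrib (X i) (X j) μ μ)
    (S : ℕ → Ω → E) (hS : ∀ k ω, S k ω = ∑ i ∈ Finset.range k, X i ω)
    (ε : ℝ) (hε : 0 < ε) :
    μ {ω | ∃ k ∈ Finset.Icc 1 n, ε ≤ ‖S k ω‖}
      ≤ 3 * (Finset.Icc 1 n).sup (fun k => μ {ω | ε / 3 ≤ ‖S k ω‖}) := by
  haveI : SecondCountableTopology E := UniformSpace.secondCountable_of_separable E
  rcases Nat.eq_zero_or_pos n with hn | hn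
  · subst hn
    have : {ω : Ω | ∃ k ∈ Finset.Icc 1 0, ε ≤ ‖S k ω‖} = ∅ := by
      ext ω; simp
    rw [this]
    simp
  -- notation
  set M : ENNReal := (Finset.Icc 1 n).sup (fun k => μ {ω | ε / 3 ≤ ‖S k ω‖}) with hM
  have hε3 : (0:ℝ) < ε / 3 := by linarith
  have hSfun : ∀ k, S k = fun ω => ∑ i ∈ Finset.range k, X i ω := fun k => funext (hS k)
  have hSmeas : ∀ k, Measurable (S k) := by
    intro k; rw [hSfun k]; exact Finset.measurable_sum _ fun i _ => hmeas i
  -- target sets in E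
  have hsetA : MeasurableSet {x : E | ε ≤ ‖x‖} :=
    (isClosed_le continuous_const continuous_norm).measurableSet
  have hsetC : MeasurableSet {x : E | ε / 3 ≤ ‖x‖} :=
    (isClosed_le continuous_const continuous_norm).measurableSet
  have hsetO : MeasurableSet {x : E | ‖x‖ < ε} :=
    (isOpen_lt continuous_norm continuous_const).measurableSet
  -- first entrance decomposition
  set A : ℕ → Set Ω := fun k =>
    S k ⁻¹' {x : E | ε ≤ ‖x‖} ∩ ⋂ j ∈ Finset.Icc 1 (k-1), S j ⁻¹' {x : E | ‖x‖ < ε} with hA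
  have hAmeas : ∀ k, MeasurableSet (A k) := by
    intro k
    exact ((hSmeas k) hsetA).inter
      (MeasurableSet.biInter (Finset.Icc 1 (k-1)).countable_toSet
        fun j _ => (hSmeas j) hsetO)
  -- increments
  set D : ℕ → Ω → E := fun k ω => ∑ i ∈ Finset.Ico k n, X i ω with hD
  have hDmeas : ∀ k, Measurable (D k) := fun k => Finset.measurable_sum _ fun i _ => hmeas i
  set C : ℕ → Set Ω := fun k => D k ⁻¹' {x : E | ε / 3 ≤ ‖x‖} with hC
  set B : Set Ω := S n ⁻¹' {x : E | ε / 3 ≤ ‖x‖} with hB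
  have hBmeas : MeasurableSet B := (hSmeas n) hsetC
  -- key independence
  have key : ∀ k ∈ Finset.Icc 1 n, μ (A k ∩ C k) = μ (A k) * μ (C k) := by
    intro k hk
    set mX : ℕ → MeasurableSpace Ω := fun i => MeasurableSpace.comap (X i) inferInstance
      with hmX
    set mL : MeasurableSpace Ω := ⨆ i ∈ {i : ℕ | i < k}, mX i with hmL
    set mR : MeasurableSpace Ω := ⨆ i ∈ {i : ℕ | k ≤ i}, mX i with hmR
    have hIndep : Indep mL mR μ := by
      refine indep_iSup_of_disjoint (fun i => (hmeas i).comap_le) hindep.iIndep ?_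
      rw [Set.disjoint_left]
      intro i hi hi'
      simp only [Set.mem_setOf_eq] at hi hi'
      omega
    have hXL : ∀ i, i < k → Measurable[mL] (X i) := by
      intro i hi
      exact Measurable.mono (Measurable.of_comap_le le_rfl)
        (le_biSup mX hi) le_rfl
    have hXR : ∀ i, k ≤ i → Measurable[mR] (X i) := by
      intro i hi
      exact Measurable.mono (Measurable.of_comap_le le_rfl)
        (le_biSup mX hi) le_rfl
    have hSL : ∀ j, j ≤ k → Measurable[mL] (S j) := by
      intro j hj
      rw [hSfun j]
      exact Finset.measurable_sum _ fun i hi =>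
        hXL i (lt_of_lt_of_le (Finset.mem_range.1 hi) hj)
    have hAk : MeasurableSet[mL] (A k) := by
      refine MeasurableSet.inter (hSL k le_rfl hsetA) ?_
      refine MeasurableSet.biInter (Finset.Icc 1 (k-1)).countable_toSet fun j hj => ?_
      have hjk : j ≤ k := le_trans (Finset.mem_Icc.1 hj).2 (Nat.sub_le k 1)
      exact hSL j hjk hsetO
    have hDk : Measurable[mR] (D k) :=
      Finset.measurable_sum _ fun i hi => hXR i (Finset.mem_Ico.1 hi).1
    have hCk : MeasurableSet[mR] (C k) := hDk hsetC
    exact (Indep_iff mL mR μ).1 hIndep _ _ hAk hCk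
  -- the increment is distributed as S (n-k)
  have hCle : ∀ k ∈ Finset.Icc 1 n, μ (C k) ≤ M := by
    intro k hk
    obtain ⟨hk1, hkn⟩ := Finset.mem_Icc.1 hk
    rcases eq_or_lt_of_le hkn with hkeq | hklt
    · have : C k = ∅ := by
        subst hkeq
        ext ω
        simp only [hC, Set.mem_preimage, Set.mem_setOf_eq, hD, Finset.Ico_self,
          Finset.sum_empty, norm_zero, Set.mem_empty_iff_false, iff_false, not_le]
        exact hε3
      rw [this]; simp
    · have hid := aux_identDistrib_sum_Ico X hmeas hindep hident (n - k) k
      have hkk : k + (n - k) = n := Nat.add_sub_cancel' hkn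
      rw [hkk] at hid
      have : μ (C k) = μ (S (n-k) ⁻¹' {x : E | ε / 3 ≤ ‖x‖}) := by
        have := hid.measure_mem_eq (s := {x : E | ε / 3 ≤ ‖x‖}) hsetC
        rw [hC]
        simp only [hD]
        rw [this, hSfun (n-k)]
      rw [this]
      have hmem : n - k ∈ Finset.Icc 1 n := by
        rw [Finset.mem_Icc]
        omega
      have : (S (n-k) ⁻¹' {x : E | ε / 3 ≤ ‖x‖}) = {ω | ε / 3 ≤ ‖S (n-k) ω‖} := rfl
      rw [this, hM]
      exact Finset.le_sup (f := fun k => μ {ω | ε / 3 ≤ ‖S k ω‖}) hmem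
  -- A k is covered by (A k ∩ B) and (A k ∩ C k)
  have hsubset : ∀ k ∈ Finset.Icc 1 n, A k ⊆ (A k ∩ B) ∪ (A k ∩ C k) := by
    intro k hk ω hω
    obtain ⟨hk1, hkn⟩ := Finset.mem_Icc.1 hk
    by_cases hb : ε / 3 ≤ ‖S n ω‖
    · exact Or.inl ⟨hω, hb⟩
    · refine Or.inr ⟨hω, ?_⟩
      push_neg at hb
      have hsum : S k ω + D k ω = S n ω := by
        simp only [hS, hD, Finset.range_eq_Ico]
        exact Finset.sum_Ico_consecutive _ (Nat.zero_le k) hkn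
      have hAω : ε ≤ ‖S k ω‖ := hω.1
      have htri : ‖S k ω‖ ≤ ‖S n ω‖ + ‖D k ω‖ := by
        calc ‖S k ω‖ = ‖S n ω - D k ω‖ := by rw [← hsum, add_sub_cancel_right]
          _ ≤ ‖S n ω‖ + ‖D k ω‖ := norm_sub_le _ _
      show ε / 3 ≤ ‖D k ω‖
      linarith
  -- pairwise disjointness of the A k
  have hdisj0 : ∀ j k, 1 ≤ j → j < k → Disjoint (A j) (A k) := by
    intro j k hj1 hjk
    refine Set.disjoint_left.2 fun ω hωj hωk => ?_
    have h1 : ε ≤ ‖S j ω‖ := hωj.1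
    have hjmem : j ∈ Finset.Icc 1 (k-1) := Finset.mem_Icc.2 ⟨hj1, by omega⟩
    have h2 : ‖S j ω‖ < ε := Set.mem_iInter₂.1 hωk.2 j hjmem
    linarith
  have hdisj : Set.PairwiseDisjoint (↑(Finset.Icc 1 n) : Set ℕ) A := by
    intro j hj k hk hjk
    simp only [Finset.coe_Icc, Set.mem_Icc] at hj hk
    rcases lt_or_gt_of_ne hjk with h | h
    · exact hdisj0 j k hj.1 h
    · exact (hdisj0 k j hk.1 h).symm
  -- the union identity
  have hunion : {ω | ∃ k ∈ Finset.Icc 1 n, ε ≤ ‖S k ω‖} = ⋃ k ∈ Finset.Icc 1 n, A k := by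
    ext ω
    constructor
    · rintro ⟨k, hk, hεk⟩
      obtain ⟨hk1, hkn⟩ := Finset.mem_Icc.1 hk
      have hex : ∃ m, (1 ≤ m ∧ m ≤ n) ∧ ε ≤ ‖S m ω‖ := ⟨k, ⟨hk1, hkn⟩, hεk⟩
      set k0 := Nat.find hex with hk0
      obtain ⟨⟨h01, h0n⟩, h0ε⟩ := Nat.find_spec hex
      refine Set.mem_biUnion (Finset.mem_Icc.2 ⟨h01, h0n⟩) ?_
      refine ⟨h0ε, ?_⟩
      refine Set.mem_iInter₂.2 fun j hj => ?_
      obtain ⟨hj1, hj2⟩ := Finset.mem_Icc.1 hj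
      have hjlt : j < k0 := by omega
      have := Nat.find_min hex hjlt
      push_neg at this
      exact this ⟨hj1, by omega⟩
    · intro h
      obtain ⟨k, hk, hωk⟩ := Set.mem_iUnion₂.1 h
      exact ⟨k, hk, hωk.1⟩
  -- bounds
  have hBle : μ B ≤ M := by
    have hmemn : n ∈ Finset.Icc 1 n := Finset.mem_Icc.2 ⟨hn, le_rfl⟩
    have : B = {ω | ε / 3 ≤ ‖S n ω‖} := rfl
    rw [this, hM]
    exact Finset.le_sup (f := fun k => μ {ω | ε / 3 ≤ ‖S k ω‖}) hmemn
  calc μ {ω | ∃ k ∈ Finset.Icc 1 n, ε ≤ ‖S k ω‖}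
      = ∑ k ∈ Finset.Icc 1 n, μ (A k) := by
        rw [hunion, measure_biUnion_finset hdisj fun k _ => hAmeas k]
    _ ≤ ∑ k ∈ Finset.Icc 1 n, (μ (A k ∩ B) + μ (A k) * μ (C k)) := by
        refine Finset.sum_le_sum fun k hk => ?_
        calc μ (A k) ≤ μ ((A k ∩ B) ∪ (A k ∩ C k)) := measure_mono (hsubset k hk)
          _ ≤ μ (A k ∩ B) + μ (A k ∩ C k) := measure_union_le _ _
          _ = μ (A k ∩ B) + μ (A k) * μ (C k) := by rw [key k hk]
    _ ≤ ∑ k ∈ Finset.Icc 1 n, (μ (A k ∩ B) + μ (A k) * M) := by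
        refine Finset.sum_le_sum fun k hk => ?_
        exact add_le_add le_rfl (mul_le_mul_right (hCle k hk) _)
    _ = (∑ k ∈ Finset.Icc 1 n, μ (A k ∩ B)) + (∑ k ∈ Finset.Icc 1 n, μ (A k)) * M := by
        rw [Finset.sum_add_distrib, Finset.sum_mul]
    _ ≤ M + 1 * M := by
        refine add_le_add ?_ (mul_le_mul_left ?_ M)
        · refine le_trans ?_ hBle
          have hd2 : Set.PairwiseDisjoint (↑(Finset.Icc 1 n) : Set ℕ)
              (fun k => A k ∩ B) := fun j hj k hk hjk =>
            (hdisj hj hk hjk).mono Set.inter_subset_left Set.inter_subset_left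
          rw [← measure_biUnion_finset hd2 fun k _ => (hAmeas k).inter hBmeas]
          exact measure_mono (Set.iUnion₂_subset fun k _ => Set.inter_subset_right)
        · rw [← measure_biUnion_finset hdisj fun k _ => hAmeas k]
          exact prob_le_one
    _ = M + M := by rw [one_mul]
    _ ≤ 3 * M := by
        rw [← two_mul]
        exact mul_le_mul_left (by norm_num) M
end

section
/- Knight's identity: for all real $u$ and $v$ and $\tau \in (0,1)$, with $\rho_\tau(u) = u(\tau - 1\{u \le 0\})$, one has $\rho_\tau(u - v) - \rho_\tau(u) = -v(\tau - 1\{u \le 0\}) + \int_0^v \big(1\{u \le t\} - 1\{u \le 0\}\big)\,dt$. -/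
open MeasureTheory Set

lemma key_le (a b c : ℝ) (h : a ≤ b) :
    ∫ t in a..b, (if c ≤ t then (1 : ℝ) else 0) = max b c - max a c := by
  rw [intervalIntegral.integral_of_le h]
  have heq : ∀ t : ℝ, (if c ≤ t then (1 : ℝ) else 0)
      = (Ici c).indicator (fun _ => (1 : ℝ)) t := by
    intro t; simp [indicator_apply, mem_Ici]
  simp_rw [heq]
  rw [setIntegral_indicator measurableSet_Ici]
  have hs : (Ioc a b ∩ Ici c : Set ℝ) =ᵐ[volume] (Ioc (max a c) b : Set ℝ) := by
    have he : (Ioc a b ∩ Ioi c : Set ℝ) = Ioc (max a c) b := by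
          ext x; simp only [mem_inter_iff, mem_Ioc, mem_Ioi, max_lt_iff]; tauto
    rw [← he]
    exact Filter.EventuallyEq.inter (ae_eq_refl _) Ioi_ae_eq_Ici.symm
  rw [setIntegral_congr_set hs]
  simp only [setIntegral_const, smul_eq_mul, mul_one]
  rw [measureReal_def, Real.volume_Ioc]
  rcases le_total c b with hcb | hcb
  · rw [max_eq_left hcb, ENNReal.toReal_ofReal (by simp [hcb, h])]
  · have h1 : max a c = c := max_eq_right (h.trans hcb)
    have h2 : max b c = c := max_eq_right hcb
    rw [h1, h2, ENNReal.ofReal_eq_zero.mpr (by linarith)]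
    simp

lemma key (a b c : ℝ) :
    ∫ t in a..b, (if c ≤ t then (1 : ℝ) else 0) = max b c - max a c := by
  rcases le_total a b with h | h
  · exact key_le a b c h
  · rw [intervalIntegral.integral_symm, key_le b a c h]; ring

/-- Knight's identity for the quantile-regression check function. -/
theorem stmt5 (τ u v : ℝ) (hτ : τ ∈ Set.Ioo (0 : ℝ) 1)
    (ρ : ℝ → ℝ) (hρ : ∀ w, ρ w = w * (τ - if w ≤ 0 then 1 else 0)) :
    ρ (u - v) - ρ u
      = -v * (τ - if u ≤ 0 then 1 else 0)
        + ∫ t in (0 : ℝ)..v,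
            ((if u ≤ t then (1 : ℝ) else 0) - (if u ≤ 0 then 1 else 0)) := by
  have hmono : Monotone (fun t : ℝ => if u ≤ t then (1 : ℝ) else 0) := by
    intro x y hxy
    by_cases hx : u ≤ x <;> by_cases hy : u ≤ y <;> simp [hx, hy] <;> linarith
  have hint : ∫ t in (0 : ℝ)..v,
      ((if u ≤ t then (1 : ℝ) else 0) - (if u ≤ 0 then 1 else 0))
      = (max v u - max 0 u) - v * (if u ≤ 0 then 1 else 0) := by
    rw [intervalIntegral.integral_sub hmono.intervalIntegrable
        (intervalIntegrable_const), key, intervalIntegral.integral_const]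
    simp [mul_comm]
  rw [hint, hρ, hρ]
  by_cases h1 : u ≤ 0 <;> by_cases h2 : u - v ≤ 0 <;>
    simp only [h1, h2, if_true, if_false] <;>
    [skip; skip; skip; skip] <;>
  · rcases le_total v u with h3 | h3 <;> rcases le_total (0:ℝ) u with h4 | h4 <;>
      simp [max_eq_left, max_eq_right, h3, h4] <;> ring_nf <;> nlinarith [hτ.1, hτ.2]
end
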